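/- Let ρ, σ be density matrices and E = {E₁, …, E_m} a POVM (positive semidefinite operators summing to the identity). Set pᵢ = Tr(ρEᵢ) and qᵢ = Tr(σEᵢ). Then F(ρ,σ) ≤ Σᵢ √(pᵢ qᵢ). -/

import Mathlib

open scoped Kronecker ComplexOrder Classical

/-- Square root of a positive semidefinite matrix (junk value `0` otherwise). -/
noncomputable def msqrt {n : Type*} [Fintype n] [DecidableEq n]
    (M : Matrix n n ℂ) : Matrix n n ℂ :=
  if h : M.PosSemidef then
    (h.1.eigenvectorUnitary : Matrix n n ℂ) *
      Matrix.diagonal (((↑) : ℝ → ℂ) ∘ Real.sqrt ∘ h.1.eigenvalues) *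
      (star h.1.eigenvectorUnitary : Matrix n n ℂ)
  else 0

/-- Quantum fidelity `F(ρ,σ) = Tr √(√ρ σ √ρ)`. -/
noncomputable def fidelity {n : Type*} [Fintype n] [DecidableEq n]
    (ρ σ : Matrix n n ℂ) : ℝ :=
  ((msqrt (msqrt ρ * σ * msqrt ρ)).trace).re

/-- A density matrix: positive semidefinite with unit trace. -/
def IsDensity {n : Type*} [Fintype n] [DecidableEq n] (ρ : Matrix n n ℂ) : Prop :=
  ρ.PosSemidef ∧ ρ.trace = 1

/-- Partial trace over the second tensor factor. -/
noncomputable def ptraceB {A B : Type*} [Fintype A] [Fintype B]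
    (M : Matrix (A × B) (A × B) ℂ) : Matrix A A ℂ :=
  Matrix.of fun a a' => ∑ b, M (a, b) (a', b)

/-- Partial trace over the first tensor factor. -/
noncomputable def ptraceA {A B : Type*} [Fintype A] [Fintype B]
    (M : Matrix (A × B) (A × B) ℂ) : Matrix B B ℂ :=
  Matrix.of fun b b' => ∑ a, M (a, b) (a, b')

/-- Square root of a positive semidefinite matrix, via its spectral decomposition. -/
noncomputable def Matrix.PosSemidef.sqrt {n : Type*} [Fintype n] [DecidableEq n]
    {M : Matrix n n ℂ} (h : M.PosSemidef) : Matrix n n ℂ :=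
  (h.1.eigenvectorUnitary : Matrix n n ℂ) *
    Matrix.diagonal (((↑) : ℝ → ℂ) ∘ Real.sqrt ∘ h.1.eigenvalues) *
    (star h.1.eigenvectorUnitary : Matrix n n ℂ)

theorem Matrix.PosSemidef.posSemidef_sqrt {n : Type*} [Fintype n] [DecidableEq n]
    {M : Matrix n n ℂ} (h : M.PosSemidef) : h.sqrt.PosSemidef :=
  (Matrix.PosSemidef.diagonal (fun i => Complex.zero_le_real.mpr (Real.sqrt_nonneg _) :
    (0 : n → ℂ) ≤ ((↑) : ℝ → ℂ) ∘ Real.sqrt ∘ h.1.eigenvalues)).mul_mul_conjTranspose_same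
      (h.1.eigenvectorUnitary : Matrix n n ℂ)

theorem Matrix.PosSemidef.sqrt_mul_self {n : Type*} [Fintype n] [DecidableEq n]
    {M : Matrix n n ℂ} (h : M.PosSemidef) : h.sqrt * h.sqrt = M := by
  unfold Matrix.PosSemidef.sqrt
  set U := (h.1.eigenvectorUnitary : Matrix n n ℂ)
  set Us := (star h.1.eigenvectorUnitary : Matrix n n ℂ)
  set D := Matrix.diagonal (((↑) : ℝ → ℂ) ∘ Real.sqrt ∘ h.1.eigenvalues)
  have hV : Us * U = 1 := Matrix.mem_unitaryGroup_iff'.mp h.1.eigenvectorUnitary.2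
  have hD : D * D = Matrix.diagonal (RCLike.ofReal ∘ h.1.eigenvalues) := by
    rw [Matrix.diagonal_mul_diagonal]
    congr 1
    funext i
    show (↑(Real.sqrt (h.1.eigenvalues i)) : ℂ) * ↑(Real.sqrt (h.1.eigenvalues i))
      = (h.1.eigenvalues i : ℂ)
    rw [← Complex.ofReal_mul, Real.mul_self_sqrt (h.eigenvalues_nonneg i)]
  calc U * D * Us * (U * D * Us) = U * (D * D) * Us := by
        simp only [Matrix.mul_assoc]
        rw [← Matrix.mul_assoc Us U, hV, Matrix.one_mul]
    _ = M := by
        rw [hD]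
        conv_rhs => rw [h.1.spectral_theorem]
        rfl

namespace FidAux

open Matrix

variable {n : Type*} [Fintype n] [DecidableEq n]

lemma trace_re_nonneg {A : Matrix n n ℂ} (hA : A.PosSemidef) : 0 ≤ A.trace.re := by
  have h : ∀ i, 0 ≤ (A i i).re := by
    intro i
    have h2 := hA.dotProduct_mulVec_nonneg (Pi.single i 1)
    have hst : (star (Pi.single i 1) : n → ℂ) = Pi.single i 1 := by
      funext j; by_cases h : j = i <;> simp [h, Pi.single_apply]
    have h3 : dotProduct (star (Pi.single i 1)) (A *ᵥ Pi.single i 1) = A i i := by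
      rw [hst, single_dotProduct, one_mul, Matrix.mulVec_single]; exact mul_one _
    rw [h3] at h2
    exact (Complex.le_def.mp h2).1
  rw [Matrix.trace, Complex.re_sum]
  exact Finset.sum_nonneg fun i _ => h i

lemma trace_mul_psd_re_nonneg {A B : Matrix n n ℂ} (hA : A.PosSemidef) (hB : B.PosSemidef) :
    0 ≤ ((A * B).trace).re := by
  have h1 : A * B = hA.sqrt * (hA.sqrt * B) := by rw [← mul_assoc, hA.sqrt_mul_self]
  have h2 : ((A * B).trace) = ((hA.sqrt * B * hA.sqrt).trace) := by
    rw [h1, trace_mul_comm]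
  rw [h2]
  have h3 : (hA.sqrt ᴴ * B * hA.sqrt).PosSemidef := hB.conjTranspose_mul_mul_same hA.sqrt
  rw [hA.posSemidef_sqrt.1.eq] at h3
  exact trace_re_nonneg h3

lemma cs_trace (X Y : Matrix n n ℂ) :
    ((Xᴴ * Y).trace).re ≤ Real.sqrt (((Xᴴ * X).trace).re * ((Yᴴ * Y).trace).re) := by
  have key : ∀ Z W : Matrix n n ℂ, ((Zᴴ * W).trace).re
      = ∑ p : n × n, ((starRingEnd ℂ) (Z p.2 p.1) * W p.2 p.1).re := by
    intro Z W
    rw [Matrix.trace]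
    simp only [Matrix.diag, Matrix.mul_apply, conjTranspose_apply]
    rw [← Complex.re_sum]
    rw [← Finset.sum_product']
    simp [Complex.re_sum]
  have hXX : ((Xᴴ * X).trace).re = ∑ p : n × n, ‖X p.2 p.1‖ ^ 2 := by
    rw [key]
    congr 1; funext p
    rw [mul_comm, Complex.mul_conj]
    simp [Complex.sq_norm]
  have hYY : ((Yᴴ * Y).trace).re = ∑ p : n × n, ‖Y p.2 p.1‖ ^ 2 := by
    rw [key]
    congr 1; funext p
    rw [mul_comm, Complex.mul_conj]
    simp [Complex.sq_norm]
  rw [key, hXX, hYY]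
  calc ∑ p : n × n, ((starRingEnd ℂ) (X p.2 p.1) * Y p.2 p.1).re
      ≤ ∑ p : n × n, ‖X p.2 p.1‖ * ‖Y p.2 p.1‖ := by
        apply Finset.sum_le_sum
        intro p _
        calc ((starRingEnd ℂ) (X p.2 p.1) * Y p.2 p.1).re
            ≤ ‖(starRingEnd ℂ) (X p.2 p.1) * Y p.2 p.1‖ := Complex.re_le_norm _
          _ = ‖X p.2 p.1‖ * ‖Y p.2 p.1‖ := by
              rw [norm_mul, Complex.norm_conj]
    _ ≤ Real.sqrt ((∑ p : n × n, ‖X p.2 p.1‖ ^ 2)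
          * ∑ p : n × n, ‖Y p.2 p.1‖ ^ 2) := by
        rw [Real.le_sqrt (Finset.sum_nonneg fun p _ => mul_nonneg (norm_nonneg _)
          (norm_nonneg _)) (by positivity)]
        exact Finset.sum_mul_sq_le_sq_mul_sq _ _ _

/-- Functional calculus for a Hermitian matrix via its spectral decomposition. -/
noncomputable def mfun {A : Matrix n n ℂ} (hA : A.IsHermitian) (f : ℝ → ℝ) : Matrix n n ℂ :=
  (hA.eigenvectorUnitary : Matrix n n ℂ) *
    Matrix.diagonal (fun i => (f (hA.eigenvalues i) : ℂ)) *
      (star (hA.eigenvectorUnitary : Matrix n n ℂ))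

lemma mfun_mul {A : Matrix n n ℂ} (hA : A.IsHermitian) (f g : ℝ → ℝ) :
    mfun hA f * mfun hA g = mfun hA (fun x => f x * g x) := by
  have hV : star (hA.eigenvectorUnitary : Matrix n n ℂ) * (hA.eigenvectorUnitary : Matrix n n ℂ)
      = 1 := Matrix.mem_unitaryGroup_iff'.mp (hA.eigenvectorUnitary).2
  unfold mfun
  set V := (hA.eigenvectorUnitary : Matrix n n ℂ)
  set D₁ := Matrix.diagonal (fun i => (f (hA.eigenvalues i) : ℂ))
  set D₂ := Matrix.diagonal (fun i => (g (hA.eigenvalues i) : ℂ))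
  have h1 : V * D₁ * star V * (V * D₂ * star V) = V * (D₁ * ((star V * V) * (D₂ * star V))) := by
    simp only [Matrix.mul_assoc]
  rw [h1, hV, one_mul, ← Matrix.mul_assoc D₁ D₂, Matrix.diagonal_mul_diagonal,
    ← Matrix.mul_assoc]
  congr 2
  funext i
  push_cast
  ring

lemma mfun_id {A : Matrix n n ℂ} (hA : A.IsHermitian) : mfun hA (fun x => x) = A := by
  conv_rhs => rw [hA.spectral_theorem]
  rfl

lemma mfun_conjTranspose {A : Matrix n n ℂ} (hA : A.IsHermitian) (f : ℝ → ℝ) :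
    (mfun hA f)ᴴ = mfun hA f := by
  unfold mfun
  simp only [conjTranspose_mul, ← Matrix.star_eq_conjTranspose, star_star,
    Matrix.star_eq_conjTranspose, Matrix.diagonal_conjTranspose]
  have h : star (fun i => (f (hA.eigenvalues i) : ℂ)) = fun i => (f (hA.eigenvalues i) : ℂ) := by
    funext i
    simp [Complex.conj_ofReal]
  rw [Matrix.mul_assoc]
  congr 1
  · simp [Matrix.star_eq_conjTranspose]
  · rw [h]


lemma pinv_mul_sq {A : Matrix n n ℂ} (hA : A.IsHermitian) :
    mfun hA (fun x => x⁻¹) * (A * A) = A := by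
  have hfun : (fun x : ℝ => x⁻¹ * (x * x)) = (fun x => x) := by
    funext x; by_cases hx : x = 0 <;> field_simp
  have h1 : mfun hA (fun x => x⁻¹) * (mfun hA (fun x => x) * mfun hA (fun x => x))
      = mfun hA (fun x => x) := by
    rw [mfun_mul, mfun_mul, hfun]
  rwa [mfun_id] at h1

lemma pinv_J1 {A : Matrix n n ℂ} (hA : A.IsHermitian) :
    mfun hA (fun x => x⁻¹) * ((A * A) * mfun hA (fun x => x⁻¹))
      = A * mfun hA (fun x => x⁻¹) := by
  have hfun : (fun x : ℝ => x⁻¹ * (x * x * x⁻¹)) = (fun x => x * x⁻¹) := by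
    funext x; by_cases hx : x = 0 <;> field_simp
  have h1 : mfun hA (fun x => x⁻¹) * ((mfun hA (fun x => x) * mfun hA (fun x => x))
      * mfun hA (fun x => x⁻¹)) = mfun hA (fun x => x) * mfun hA (fun x => x⁻¹) := by
    rw [mfun_mul, mfun_mul, mfun_mul, mfun_mul, hfun]
  rwa [mfun_id] at h1

lemma pinv_J2 {A : Matrix n n ℂ} (hA : A.IsHermitian) :
    (A * mfun hA (fun x => x⁻¹)) * mfun hA (fun x => x⁻¹) = mfun hA (fun x => x⁻¹) := by
  have hfun : (fun x : ℝ => x * x⁻¹ * x⁻¹) = (fun x => x⁻¹) := by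
    funext x; by_cases hx : x = 0 <;> field_simp
  have h1 : (mfun hA (fun x => x) * mfun hA (fun x => x⁻¹)) * mfun hA (fun x => x⁻¹)
      = mfun hA (fun x => x⁻¹) := by
    rw [mfun_mul, mfun_mul, hfun]
  rwa [mfun_id] at h1

end FidAux

set_option maxHeartbeats 1000000 in
open Matrix FidAux in
theorem fidelity_le_povm {n : Type*} [Fintype n] [DecidableEq n] (m : ℕ)
    (ρ σ : Matrix n n ℂ) (hρ : IsDensity ρ) (hσ : IsDensity σ)
    (E : Fin m → Matrix n n ℂ) (hE : ∀ i, (E i).PosSemidef) (hEsum : ∑ i, E i = 1) :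
    fidelity ρ σ ≤ ∑ i, Real.sqrt (((ρ * E i).trace).re * ((σ * E i).trace).re) := by
  obtain ⟨hρp, -⟩ := hρ
  obtain ⟨hσp, -⟩ := hσ
  set R := hρp.sqrt with hRdef
  set S := hσp.sqrt with hSdef
  have hRH : Rᴴ = R := hρp.posSemidef_sqrt.1
  have hSH : Sᴴ = S := hσp.posSemidef_sqrt.1
  have hRR : R * R = ρ := hρp.sqrt_mul_self
  have hSS : S * S = σ := hσp.sqrt_mul_self
  have hmsρ : msqrt ρ = R := by rw [msqrt, dif_pos hρp]; rfl
  set T := R * σ * R with hTdef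
  have hT : T.PosSemidef := by
    have := hσp.conjTranspose_mul_mul_same R
    rwa [hRH] at this
  have hfid : fidelity ρ σ = ((msqrt T).trace).re := by rw [fidelity, hmsρ]
  have hmsT : msqrt T = hT.sqrt := by rw [msqrt, dif_pos hT]; rfl
  set Q := hT.sqrt with hQdef
  have hQpsd : Q.PosSemidef := hT.posSemidef_sqrt
  have hQH : Q.IsHermitian := hQpsd.1
  have hQQ : Q * Q = T := hT.sqrt_mul_self
  set M := S * R with hMdef
  have hMH : Mᴴ = R * S := by rw [hMdef, conjTranspose_mul, hRH, hSH]
  have hMQ : Mᴴ * M = Q * Q := by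
    rw [hMH, hMdef, hQQ, hTdef]
    have h1 : R * S * (S * R) = R * ((S * S) * R) := by simp only [Matrix.mul_assoc]
    rw [h1, hSS, ← Matrix.mul_assoc]
  -- pseudoinverse of Q
  set pinv := mfun hQH (fun x => x⁻¹) with hpinvdef
  have hpinvH : pinvᴴ = pinv := mfun_conjTranspose hQH _
  -- identity : pinv * (Q * Q) = Q
  have I1 : pinv * (Q * Q) = Q := by
    have h1 := pinv_mul_sq hQH
    rwa [← hpinvdef] at h1
  -- J1 : pinv * ((Q * Q) * pinv) = Q * pinv
  have J1 : pinv * ((Q * Q) * pinv) = Q * pinv := by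
    have h1 := pinv_J1 hQH
    rwa [← hpinvdef] at h1
  -- J2 : (Q * pinv) * pinv = pinv
  have J2 : (Q * pinv) * pinv = pinv := by
    have h1 := pinv_J2 hQH
    rwa [← hpinvdef] at h1
  set W := pinv * Mᴴ with hWdef
  have hWH : Wᴴ = M * pinv := by
    rw [hWdef, conjTranspose_mul, conjTranspose_conjTranspose, hpinvH]
  -- trace identity : W * M = Q
  have hWM : W * M = Q := by
    have h1 : W * M = pinv * (Mᴴ * M) := by rw [hWdef, Matrix.mul_assoc]
    rw [h1, hMQ, I1]
  -- the contraction C = Wᴴ * W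
  set C := Wᴴ * W with hCdef
  have hCH : Cᴴ = C := by
    rw [hCdef, conjTranspose_mul, conjTranspose_conjTranspose]
  have hNN : W * Wᴴ = Q * pinv := by
    have h1 : W * Wᴴ = pinv * ((Mᴴ * M) * pinv) := by
      rw [hWdef, hWH]; simp only [Matrix.mul_assoc]
    rw [h1, hMQ, J1]
  have hCC : C * C = C := by
    have h1 : C * C = Wᴴ * ((W * Wᴴ) * W) := by
      rw [hCdef]; simp only [Matrix.mul_assoc]
    rw [h1, hNN]
    have h2 : Wᴴ * ((Q * pinv) * W) = Wᴴ * (((Q * pinv) * pinv) * Mᴴ) := by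
      rw [hWdef]; simp only [Matrix.mul_assoc]
    rw [h2, J2, ← hWdef]
  have h1C : (1 - C).PosSemidef := by
    have hexp : (1 - C)ᴴ * (1 - C) = 1 - C := by
      calc (1 - C)ᴴ * (1 - C) = (1 - C) * (1 - C) := by
            rw [conjTranspose_sub, conjTranspose_one, hCH]
        _ = 1 - C - C + C * C := by noncomm_ring
        _ = 1 - C := by rw [hCC]; abel
    exact hexp ▸ posSemidef_conjTranspose_mul_self (1 - C)
  -- decompose the trace of Q as a sum over POVM elements
  have hsum : Q.trace = ∑ i, (W * (S * E i * R)).trace := by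
    have h1 : ∑ i, W * (S * E i * R) = W * (S * R) := by
      calc ∑ i, W * (S * E i * R) = W * ∑ i, (S * E i * R) := by rw [Finset.mul_sum]
        _ = W * ((S * ∑ i, E i) * R) := by rw [← Finset.sum_mul, ← Finset.mul_sum]
        _ = W * (S * R) := by rw [hEsum, mul_one]
    rw [← Matrix.trace_sum, h1, ← hMdef, hWM]
  -- per-term bound
  have hterm : ∀ i, ((W * (S * E i * R)).trace).re
      ≤ Real.sqrt (((ρ * E i).trace).re * ((σ * E i).trace).re) := by
    intro i
    set G := (hE i).sqrt with hGdef
    have hGH : Gᴴ = G := (hE i).posSemidef_sqrt.1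
    have hGG : G * G = E i := (hE i).sqrt_mul_self
    set X := (W * (S * G))ᴴ with hXdef
    set Y := G * R with hYdef
    have hXY : W * (S * E i * R) = Xᴴ * Y := by
      rw [hXdef, conjTranspose_conjTranspose, hYdef, ← hGG]
      simp only [Matrix.mul_assoc]
    -- compute Xᴴ * X
    have hXH : Xᴴ = W * (S * G) := by rw [hXdef, conjTranspose_conjTranspose]
    have hXX : Xᴴ * X = W * (S * G) * ((G * S) * Wᴴ) := by
      rw [hXH, hXdef, conjTranspose_mul, conjTranspose_mul, hSH, hGH]
    set D := S * E i * S with hDdef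
    have hD : D.PosSemidef := by
      have := (hE i).mul_mul_conjTranspose_same S
      rwa [hSH] at this
    have htrXX : (Xᴴ * X).trace = (D * C).trace := by
      rw [hXX]
      have e1 : W * (S * G) * ((G * S) * Wᴴ) = W * ((S * (G * (G * S))) * Wᴴ) := by
        simp only [Matrix.mul_assoc]
      have e2 : S * (G * (G * S)) = D := by
        rw [hDdef, ← hGG]; simp only [Matrix.mul_assoc]
      rw [e1, e2, ← Matrix.mul_assoc, Matrix.trace_mul_comm, ← Matrix.mul_assoc,
        Matrix.trace_mul_comm, ← hCdef]
    have htrYY : (Yᴴ * Y).trace = (ρ * E i).trace := by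
      rw [hYdef, conjTranspose_mul, hGH, hRH]
      have e1 : R * G * (G * R) = R * (E i) * R := by
        rw [← hGG]; simp only [Matrix.mul_assoc]
      rw [e1]
      rw [Matrix.trace_mul_comm, ← Matrix.mul_assoc, hRR]
    -- trace of D equals trace (σ * E i)
    have htrD : D.trace = (σ * E i).trace := by
      rw [hDdef]
      rw [Matrix.trace_mul_comm, ← Matrix.mul_assoc, hSS]
    -- (D * C).trace.re ≤ D.trace.re
    have hDC : ((D * C).trace).re ≤ D.trace.re := by
      have h1 : D.trace - (D * C).trace = ((D * (1 - C)).trace) := by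
        rw [Matrix.mul_sub, mul_one, Matrix.trace_sub]
      have h2 : 0 ≤ ((D * (1 - C)).trace).re := trace_mul_psd_re_nonneg hD h1C
      have h3 : ((D * (1 - C)).trace).re = D.trace.re - ((D * C).trace).re := by
        rw [← h1, Complex.sub_re]
      linarith [h3 ▸ h2]
    have hYpos : 0 ≤ ((ρ * E i).trace).re := by
      rw [← htrYY, hYdef, conjTranspose_mul, hGH, hRH]
      have e1 : R * G * (G * R) = (G * R)ᴴ * (G * R) := by
        rw [conjTranspose_mul, hGH, hRH]
      rw [e1]
      exact trace_re_nonneg (posSemidef_conjTranspose_mul_self _)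
    calc ((W * (S * E i * R)).trace).re = ((Xᴴ * Y).trace).re := by rw [hXY]
      _ ≤ Real.sqrt (((Xᴴ * X).trace).re * ((Yᴴ * Y).trace).re) := cs_trace X Y
      _ = Real.sqrt (((D * C).trace).re * ((ρ * E i).trace).re) := by rw [htrXX, htrYY]
      _ ≤ Real.sqrt (((σ * E i).trace).re * ((ρ * E i).trace).re) := by
          apply Real.sqrt_le_sqrt
          have := mul_le_mul_of_nonneg_right (show ((D * C).trace).re ≤ ((σ * E i).trace).re by
            rw [← htrD]; exact hDC) hYpos
          linarith
      _ = Real.sqrt (((ρ * E i).trace).re * ((σ * E i).trace).re) := by rw [mul_comm]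
  calc fidelity ρ σ = (Q.trace).re := by rw [hfid, hmsT]
    _ = ∑ i, ((W * (S * E i * R)).trace).re := by rw [hsum, Complex.re_sum]
    _ ≤ ∑ i, Real.sqrt (((ρ * E i).trace).re * ((σ * E i).trace).re) :=
        Finset.sum_le_sum fun i _ => hterm i
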